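/- With the James-space construction below, for every x ∈ J_K the L¹ norm of π(x) satisfies ‖π(x)‖_{L¹(μ)} = d*(|x|) ≤ B·‖x‖_J. -/

import Mathlib

open Filter MeasureTheory

/-- The set of candidate values whose supremum (times `1/√2`) defines the James norm. -/
def jamesSet (x : ℕ → ℝ) : Set ℝ :=
  {r : ℝ | ∃ (m : ℕ) (p : Fin (m + 1) → ℕ), StrictMono p ∧
    r = Real.sqrt ((∑ i : Fin m, (x (p i.castSucc) - x (p i.succ)) ^ 2)
      + (x (p (Fin.last m)) - x (p 0)) ^ 2)}

/-- The James norm of a sequence. -/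
noncomputable def jamesNorm (x : ℕ → ℝ) : ℝ :=
  (Real.sqrt 2)⁻¹ * sSup (jamesSet x)

/-- `d_n = Σ_{j≤n} e_j = (1,…,1,0,…)` with `n+1` leading ones. -/
def dSeq (n : ℕ) : ℕ → ℝ := fun j => if j ≤ n then 1 else 0

/-- `|x| = Σ_{i≤K} |γ*_i(x)|·ω_i`, the lattice absolute value induced by a basis
`ω` with coordinate functionals `γ`. -/
noncomputable def absVec (K : ℕ) (ω : Fin (K + 1) → ℕ → ℝ)
    (γ : Fin (K + 1) → (ℕ → ℝ) →ₗ[ℝ] ℝ) (x : ℕ → ℝ) : ℕ → ℝ :=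
  ∑ i, |γ i x| • ω i

/-- `d = Σ_{j≤K} 2^{−j−1}·|d_j|`. -/
noncomputable def dElt (K : ℕ) (ω : Fin (K + 1) → ℕ → ℝ)
    (γ : Fin (K + 1) → (ℕ → ℝ) →ₗ[ℝ] ℝ) : ℕ → ℝ :=
  ∑ j : Fin (K + 1), ((2 : ℝ) ^ ((j : ℕ) + 1))⁻¹ • absVec K ω γ (dSeq j)

/-- `d* = Σ_{j≤K} 2^{−j−1}·|e*_j|`, as a function on sequences; here
`|e*_j|(x) = Σ_{i≤K} γ*_i(x)·|e*_j(ω_i)| = Σ_{i≤K} γ*_i(x)·|ω_i(j)|`. -/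
noncomputable def dStar (K : ℕ) (ω : Fin (K + 1) → ℕ → ℝ)
    (γ : Fin (K + 1) → (ℕ → ℝ) →ₗ[ℝ] ℝ) (x : ℕ → ℝ) : ℝ :=
  ∑ j : Fin (K + 1), ((2 : ℝ) ^ ((j : ℕ) + 1))⁻¹ * (∑ i, γ i x * |ω i (j : ℕ)|)

/-- The probability measure on `Ω = {0,…,K}` given by
`μ({i}) = γ*_i(d)·d*(ω_i)/d*(d)`. -/
noncomputable def jMeasure (K : ℕ) (ω : Fin (K + 1) → ℕ → ℝ)
    (γ : Fin (K + 1) → (ℕ → ℝ) →ₗ[ℝ] ℝ) : Measure (Fin (K + 1)) :=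
  ∑ i : Fin (K + 1),
    (ENNReal.ofReal (γ i (dElt K ω γ) * dStar K ω γ (ω i) / dStar K ω γ (dElt K ω γ))) •
      Measure.dirac i

/-- The embedding `π : J_K → L¹(Ω,μ)`, `π(x)(i) = (d*(d)/γ*_i(d))·γ*_i(x)`. -/
noncomputable def jPi (K : ℕ) (ω : Fin (K + 1) → ℕ → ℝ)
    (γ : Fin (K + 1) → (ℕ → ℝ) →ₗ[ℝ] ℝ) (x : ℕ → ℝ) : Fin (K + 1) → ℝ :=
  fun i => (dStar K ω γ (dElt K ω γ) / γ i (dElt K ω γ)) * γ i x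

/-- The embedding `π* : J_K* → L¹(Ω,μ)`, `π*(x*)(i) = (d*(d)/d*(ω_i))·x*(ω_i)`. -/
noncomputable def jPiStar (K : ℕ) (ω : Fin (K + 1) → ℕ → ℝ)
    (γ : Fin (K + 1) → (ℕ → ℝ) →ₗ[ℝ] ℝ) (f : (ℕ → ℝ) →ₗ[ℝ] ℝ) : Fin (K + 1) → ℝ :=
  fun i => (dStar K ω γ (dElt K ω γ) / dStar K ω γ (ω i)) * f (ω i)


section Aux

lemma zero_mem_jamesSet (x : ℕ → ℝ) : (0:ℝ) ∈ jamesSet x := by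
  refine ⟨0, fun _ => 0, ?_, ?_⟩
  · intro a b h
    have ha := a.isLt
    have hb := b.isLt
    simp only [Fin.lt_def] at h
    omega
  · simp

lemma coord_sq_le (K : ℕ) (x : ℕ → ℝ) (hx : ∀ j, K < j → x j = 0) (n : ℕ) :
    x n ^ 2 ≤ ∑ j ∈ Finset.range (K+1), x j ^ 2 := by
  by_cases h : n ≤ K
  · exact Finset.single_le_sum (f := fun j => x j ^ 2) (fun _ _ => sq_nonneg _)
      (Finset.mem_range.mpr (by omega))
  · rw [hx n (by omega)]
    simpa using Finset.sum_nonneg (fun j _ => sq_nonneg (x j))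

lemma sum_sq_le (K : ℕ) (x : ℕ → ℝ) (hx : ∀ j, K < j → x j = 0)
    {m : ℕ} (p : Fin (m+1) → ℕ) (hp : Function.Injective p) :
    ∑ i, x (p i) ^ 2 ≤ ∑ j ∈ Finset.range (K+1), x j ^ 2 := by
  classical
  have h1 : ∑ i ∈ Finset.univ.filter (fun i => p i ≤ K), x (p i) ^ 2
      = ∑ i, x (p i) ^ 2 := by
    apply Finset.sum_filter_of_ne
    intro i _ h
    by_contra hK
    push_neg at hK
    exact h (by rw [hx _ hK]; ring)
  have h2 : ∑ j ∈ (Finset.univ.filter (fun i => p i ≤ K)).image p, x j ^ 2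
      = ∑ i ∈ Finset.univ.filter (fun i => p i ≤ K), x (p i) ^ 2 :=
    Finset.sum_image (fun a _ b _ hab => hp hab)
  rw [← h1, ← h2]
  apply Finset.sum_le_sum_of_subset_of_nonneg
  · intro j hj
    simp only [Finset.mem_image, Finset.mem_filter] at hj
    obtain ⟨i, ⟨_, hi⟩, rfl⟩ := hj
    exact Finset.mem_range.mpr (by omega)
  · intro j _ _; exact sq_nonneg _

lemma bddAbove_jamesSet (K : ℕ) (x : ℕ → ℝ) (hx : ∀ j, K < j → x j = 0) :
    BddAbove (jamesSet x) := by
  classical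
  set S := ∑ j ∈ Finset.range (K+1), x j ^ 2 with hS
  have hS0 : 0 ≤ S := Finset.sum_nonneg fun _ _ => sq_nonneg _
  refine ⟨Real.sqrt (8 * S), ?_⟩
  rintro r ⟨m, p, hp, rfl⟩
  apply Real.sqrt_le_sqrt
  have hps := sum_sq_le K x hx p hp.injective
  have h2 : ∑ i : Fin m, x (p i.castSucc) ^ 2 ≤ S := by
    have : ∑ i : Fin m, x (p i.castSucc) ^ 2 ≤ ∑ i : Fin (m+1), x (p i) ^ 2 := by
      rw [Fin.sum_univ_castSucc]
      nlinarith [sq_nonneg (x (p (Fin.last m)))]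
    linarith
  have h3 : ∑ i : Fin m, x (p i.succ) ^ 2 ≤ S := by
    have : ∑ i : Fin m, x (p i.succ) ^ 2 ≤ ∑ i : Fin (m+1), x (p i) ^ 2 := by
      rw [Fin.sum_univ_succ]
      nlinarith [sq_nonneg (x (p 0))]
    linarith
  have hmid : ∑ i : Fin m, (x (p i.castSucc) - x (p i.succ)) ^ 2 ≤ 4 * S := by
    have hb : ∑ i : Fin m, (x (p i.castSucc) - x (p i.succ)) ^ 2
        ≤ ∑ i : Fin m, (2 * x (p i.castSucc) ^ 2 + 2 * x (p i.succ) ^ 2) :=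
      Finset.sum_le_sum fun i _ => by nlinarith [sq_nonneg (x (p i.castSucc) + x (p i.succ))]
    have he : ∑ i : Fin m, (2 * x (p i.castSucc) ^ 2 + 2 * x (p i.succ) ^ 2)
        = 2 * (∑ i : Fin m, x (p i.castSucc) ^ 2) + 2 * (∑ i : Fin m, x (p i.succ) ^ 2) := by
      rw [Finset.sum_add_distrib, Finset.mul_sum, Finset.mul_sum]
    linarith
  have hl := coord_sq_le K x hx (p (Fin.last m))
  have h0 := coord_sq_le K x hx (p 0)
  nlinarith [sq_nonneg (x (p (Fin.last m)) + x (p 0))]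

lemma abs_coord_le_jamesNorm (K : ℕ) (x : ℕ → ℝ) (hx : ∀ j, K < j → x j = 0) (j : ℕ) :
    |x j| ≤ jamesNorm x := by
  have hmem : Real.sqrt 2 * |x j| ∈ jamesSet x := by
    refine ⟨1, fun i => if i = 0 then j else K + j + 1, ?_, ?_⟩
    · intro a b hab
      fin_cases a <;> fin_cases b <;> simp_all <;> omega
    · have hn : x (K + j + 1) = 0 := hx _ (by omega)
      have e1 : Fin.last 1 ≠ (0 : Fin 2) := by decide
      simp only [Fin.sum_univ_one, if_pos rfl, e1, if_neg e1, Fin.isValue]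
      have e2 : (Fin.castSucc (0 : Fin 1)) = (0 : Fin 2) := rfl
      have e3 : (Fin.succ (0 : Fin 1)) ≠ (0 : Fin 2) := by decide
      rw [e2, if_pos rfl, if_neg e3, hn]
      norm_num
      rw [hn, show x j ^ 2 + (0 - x j) ^ 2 = 2 * x j ^ 2 by ring,
        Real.sqrt_mul (by norm_num), Real.sqrt_sq_eq_abs]
  have hle := le_csSup (bddAbove_jamesSet K x hx) hmem
  have h2 : (0:ℝ) < Real.sqrt 2 := by positivity
  calc |x j| = (Real.sqrt 2)⁻¹ * (Real.sqrt 2 * |x j|) := by field_simp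
    _ ≤ jamesNorm x := mul_le_mul_of_nonneg_left hle (by positivity)

lemma jamesNorm_nonneg' (K : ℕ) (x : ℕ → ℝ) (hx : ∀ j, K < j → x j = 0) :
    0 ≤ jamesNorm x :=
  mul_nonneg (by positivity)
    (le_csSup (bddAbove_jamesSet K x hx) (zero_mem_jamesSet x))

lemma gamma_sum_smul (K : ℕ) (ω : Fin (K + 1) → ℕ → ℝ)
    (γ : Fin (K + 1) → (ℕ → ℝ) →ₗ[ℝ] ℝ)
    (hdual : ∀ i i' : Fin (K + 1), γ i (ω i') = if i = i' then 1 else 0)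
    (c : Fin (K+1) → ℝ) (i' : Fin (K+1)) :
    γ i' (∑ i, c i • ω i) = c i' := by
  rw [map_sum]
  simp [_root_.map_smul, hdual, Finset.sum_ite_eq]

lemma dStar_omega (K : ℕ) (ω : Fin (K + 1) → ℕ → ℝ)
    (γ : Fin (K + 1) → (ℕ → ℝ) →ₗ[ℝ] ℝ)
    (hdual : ∀ i i' : Fin (K + 1), γ i (ω i') = if i = i' then 1 else 0)
    (i : Fin (K+1)) :
    dStar K ω γ (ω i) = ∑ j : Fin (K+1), ((2:ℝ) ^ ((j:ℕ)+1))⁻¹ * |ω i (j:ℕ)| := by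
  unfold dStar
  refine Finset.sum_congr rfl fun j _ => ?_
  congr 1
  simp [hdual, Finset.sum_ite_eq']

lemma dStar_eval (K : ℕ) (ω : Fin (K + 1) → ℕ → ℝ)
    (γ : Fin (K + 1) → (ℕ → ℝ) →ₗ[ℝ] ℝ)
    (hdual : ∀ i i' : Fin (K + 1), γ i (ω i') = if i = i' then 1 else 0)
    (c : Fin (K+1) → ℝ) :
    dStar K ω γ (∑ i, c i • ω i)
      = ∑ i, c i * (∑ j : Fin (K+1), ((2:ℝ) ^ ((j:ℕ)+1))⁻¹ * |ω i (j:ℕ)|) := by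
  unfold dStar
  simp only [gamma_sum_smul K ω γ hdual c, Finset.mul_sum]
  rw [Finset.sum_comm]
  exact Finset.sum_congr rfl fun i _ => Finset.sum_congr rfl fun j _ => by ring

lemma two_pow_inv_sum (n : ℕ) :
    ∑ j ∈ Finset.range n, ((2:ℝ) ^ (j+1))⁻¹ = 1 - ((2:ℝ) ^ n)⁻¹ := by
  induction n with
  | zero => simp
  | succ n ih =>
    rw [Finset.sum_range_succ, ih, pow_succ]
    have h : (2:ℝ) ^ n ≠ 0 := by positivity
    field_simp
    ring

end Aux

/-- `‖π(x)‖_{L¹(μ)} = d*(|x|) ≤ B·‖x‖_J` for every `x ∈ J_K`. -/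
theorem jPi_L1_norm
    (K : ℕ) (B : ℝ) (hB : 1 ≤ B)
    (ω : Fin (K + 1) → ℕ → ℝ) (γ : Fin (K + 1) → (ℕ → ℝ) →ₗ[ℝ] ℝ)
    (hω_supp : ∀ i, ∀ j, K < j → ω i j = 0)
    (hγ_supp : ∀ i, ∀ x : ℕ → ℝ, (∀ j, j ≤ K → x j = 0) → γ i x = 0)
    (hbasis : ∀ x : ℕ → ℝ, (∀ j, K < j → x j = 0) → (∑ i, γ i x • ω i) = x)
    (hdual : ∀ i i' : Fin (K + 1), γ i (ω i') = if i = i' then 1 else 0)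
    (hunc : ∀ (α ε : Fin (K + 1) → ℝ), (∀ i, ε i = 1 ∨ ε i = -1) →
      jamesNorm (∑ i, (ε i * α i) • ω i) ≤ B * jamesNorm (∑ i, α i • ω i))
    (hγd : ∀ i, 0 < γ i (dElt K ω γ)) (hdω : ∀ i, 0 < dStar K ω γ (ω i))
    (x : ℕ → ℝ) (hx : ∀ j, K < j → x j = 0) :
    (∫ i, |jPi K ω γ x i| ∂(jMeasure K ω γ)) = dStar K ω γ (absVec K ω γ x) ∧
      dStar K ω γ (absVec K ω γ x) ≤ B * jamesNorm x := by
  classical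
  set D := dElt K ω γ with hD
  have hD_supp : ∀ j, K < j → D j = 0 := by
    intro j hj
    simp [hD, dElt, absVec, Finset.sum_apply, Pi.smul_apply, hω_supp _ _ hj]
  have hDsum : (∑ i, γ i D • ω i) = D := hbasis D hD_supp
  have hdsD : dStar K ω γ D = ∑ i, γ i D * dStar K ω γ (ω i) := by
    rw [← hDsum, dStar_eval K ω γ hdual]
    exact Finset.sum_congr rfl fun i _ => by rw [← dStar_omega K ω γ hdual i, hDsum]
  have hdsD_pos : 0 < dStar K ω γ D := by
    rw [hdsD]
    exact Finset.sum_pos (fun i _ => mul_pos (hγd i) (hdω i)) Finset.univ_nonempty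
  have hwnn : ∀ i : Fin (K+1),
      0 ≤ γ i D * dStar K ω γ (ω i) / dStar K ω γ D := fun i =>
    div_nonneg (mul_pos (hγd i) (hdω i)).le hdsD_pos.le
  have hRHS : dStar K ω γ (absVec K ω γ x) = ∑ i, |γ i x| * dStar K ω γ (ω i) := by
    rw [absVec, dStar_eval K ω γ hdual]
    exact Finset.sum_congr rfl fun i _ => by rw [← dStar_omega K ω γ hdual i]
  constructor
  · -- the integral computation
    haveI : IsFiniteMeasure (jMeasure K ω γ) := by
      constructor
      rw [jMeasure, Measure.finset_sum_apply]
      simp only [Measure.smul_apply, smul_eq_mul]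
      exact ENNReal.sum_lt_top.mpr fun i _ =>
        ENNReal.mul_lt_top ENNReal.ofReal_lt_top (by simp)
    have hμ : ∀ i : Fin (K+1), jMeasure K ω γ {i}
        = ENNReal.ofReal (γ i D * dStar K ω γ (ω i) / dStar K ω γ D) := by
      intro i
      rw [jMeasure, Measure.finset_sum_apply]
      simp [Measure.smul_apply, Measure.dirac_apply, Set.indicator_apply,
        Set.mem_singleton_iff, Finset.sum_ite_eq]
      rfl
    rw [integral_fintype (Integrable.of_finite), hRHS]
    refine Finset.sum_congr rfl fun i _ => ?_
    rw [measureReal_def, hμ i, ENNReal.toReal_ofReal (hwnn i), smul_eq_mul]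
    have h1 : |jPi K ω γ x i| = (dStar K ω γ D / γ i D) * |γ i x| := by
      rw [jPi, abs_mul, abs_of_pos (div_pos hdsD_pos (hγd i))]
    rw [h1]
    have h2 : γ i D ≠ 0 := (hγd i).ne'
    have h3 : dStar K ω γ D ≠ 0 := hdsD_pos.ne'
    field_simp
  · -- the inequality
    have hjN : 0 ≤ jamesNorm x := jamesNorm_nonneg' K x hx
    have hBjN : 0 ≤ B * jamesNorm x := mul_nonneg (le_trans zero_le_one hB) hjN
    have hswap : ∑ i, |γ i x| * dStar K ω γ (ω i)
        = ∑ j : Fin (K+1), ((2:ℝ) ^ ((j:ℕ)+1))⁻¹ * ∑ i, |γ i x| * |ω i (j:ℕ)| := by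
      simp only [dStar_omega K ω γ hdual, Finset.mul_sum]
      rw [Finset.sum_comm]
      exact Finset.sum_congr rfl fun j _ => Finset.sum_congr rfl fun i _ => by ring
    have hj : ∀ j : Fin (K+1), (∑ i, |γ i x| * |ω i (j:ℕ)|) ≤ B * jamesNorm x := by
      intro j
      set ε : Fin (K+1) → ℝ := fun i => if 0 ≤ γ i x * ω i (j:ℕ) then 1 else -1 with hε
      have hεval : ∀ i, ε i = 1 ∨ ε i = -1 := fun i => by
        rw [hε]; dsimp only; split
        · exact Or.inl rfl
        · exact Or.inr rfl
      set y : ℕ → ℝ := ∑ i, (ε i * γ i x) • ω i with hy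
      have hy_supp : ∀ n, K < n → y n = 0 := by
        intro n hn
        simp [hy, Finset.sum_apply, Pi.smul_apply, hω_supp _ _ hn]
      have h1 : (∑ i, |γ i x| * |ω i (j:ℕ)|) = y (j:ℕ) := by
        simp only [hy, Finset.sum_apply, Pi.smul_apply, smul_eq_mul]
        refine Finset.sum_congr rfl fun i _ => ?_
        rw [← abs_mul, hε]
        dsimp only
        rcases le_or_gt 0 (γ i x * ω i (j:ℕ)) with h | h
        · rw [if_pos h, abs_of_nonneg h, one_mul]
        · rw [if_neg (not_le.mpr h), abs_of_neg h]
          ring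
      have h2 : y (j:ℕ) ≤ jamesNorm y :=
        (le_abs_self _).trans (abs_coord_le_jamesNorm K y hy_supp j)
      have h3 : jamesNorm y ≤ B * jamesNorm x := by
        have h := hunc (fun i => γ i x) ε hεval
        rwa [hbasis x hx] at h
      linarith
    have hgeom : ∑ j : Fin (K+1), ((2:ℝ) ^ ((j:ℕ)+1))⁻¹ ≤ 1 := by
      rw [Fin.sum_univ_eq_sum_range (fun j => ((2:ℝ) ^ (j+1))⁻¹) (K+1),
        two_pow_inv_sum]
      have : (0:ℝ) < ((2:ℝ) ^ (K+1))⁻¹ := by positivity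
      linarith
    calc dStar K ω γ (absVec K ω γ x)
        = ∑ j : Fin (K+1), ((2:ℝ) ^ ((j:ℕ)+1))⁻¹ * ∑ i, |γ i x| * |ω i (j:ℕ)| := by
          rw [hRHS, hswap]
      _ ≤ ∑ j : Fin (K+1), ((2:ℝ) ^ ((j:ℕ)+1))⁻¹ * (B * jamesNorm x) :=
          Finset.sum_le_sum fun j _ =>
            mul_le_mul_of_nonneg_left (hj j) (by positivity)
      _ = (∑ j : Fin (K+1), ((2:ℝ) ^ ((j:ℕ)+1))⁻¹) * (B * jamesNorm x) :=
          (Finset.sum_mul _ _ _).symm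
      _ ≤ 1 * (B * jamesNorm x) := mul_le_mul_of_nonneg_right hgeom hBjN
      _ = B * jamesNorm x := one_mul _
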